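/- Let $r, s$ be reals with $0 \le r < 1 < s$, let $\mu$ be real, and let $A > 0$, $B$, $C$ be real numbers satisfying $A = \mu C + B$ (the Nehari constraint) and $(s-r)B < (1-r)A$. Then $\frac{A}{2} - \frac{\mu C}{r+1} - \frac{B}{s+1} < \frac{(1-r)(1-s)}{2(1+r)(1+s)}\,A < 0$. -/
import Mathlib

/-- Lemma 5(iii) (Lemma CL(iii)), computation: on the Nehari constraint `A = μC + B`
with `(s-r)B < (1-r)A`, the energy is negative:
`A/2 - μC/(r+1) - B/(s+1) < (1-r)(1-s)/(2(1+r)(1+s)) · A < 0`. -/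
theorem stmt_9 (r s μ A B C : ℝ) (hr0 : 0 ≤ r) (hr1 : r < 1) (hs : 1 < s)
    (hA : 0 < A)
    (hNehari : A = μ * C + B)
    (hplus : (s - r) * B < (1 - r) * A) :
    A / 2 - μ * C / (r + 1) - B / (s + 1) <
      (1 - r) * (1 - s) / (2 * (1 + r) * (1 + s)) * A ∧
    (1 - r) * (1 - s) / (2 * (1 + r) * (1 + s)) * A < 0 := by
  have hμC : μ * C = A - B := by linarith
  have hr : (0:ℝ) < r + 1 := by linarith
  have hs1 : (0:ℝ) < s + 1 := by linarith
  constructor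
  · rw [hμC, div_sub_div _ _ two_ne_zero (ne_of_gt hr), div_sub_div _ _ (by positivity) (ne_of_gt hs1),
      show (1-r)*(1-s)/(2*(1+r)*(1+s))*A = ((1-r)*(1-s)*A)/(2*(1+r)*(1+s)) from by ring,
      div_lt_div_iff₀ (by positivity) (by positivity)]
    nlinarith [mul_pos hr hs1, mul_pos (mul_pos hr hs1) hA]
  · have : (1 - r) * (1 - s) < 0 := mul_neg_of_pos_of_neg (by linarith) (by linarith)
    have hd : (0:ℝ) < 2 * (1 + r) * (1 + s) := by positivity
    exact mul_neg_of_neg_of_pos (div_neg_of_neg_of_pos this hd) hA
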